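/- Let (α_k) be a Markov chain on the nonnegative integers, and suppose there exist N and constants such that for n > N: the one-step drift satisfies E(α_{k+1} − α_k | α_k = n) ≤ −1/2, the conditional variance Var(α_{k+1} − α_k | α_k = n) is bounded by a constant V < ∞, and α_{k+1} ≥ α_k − 1 almost surely. Then almost surely lim inf_{k→∞} α_k < ∞. -/

import Mathlib

open MeasureTheory Filter

set_option linter.unusedSectionVars false

namespace BKNSAux

variable {Ω : Type*} [MeasurableSpace Ω] {μ : Measure Ω} [IsProbabilityMeasure μ]
  {α : ℕ → Ω → ℕ}

/-- The natural filtration of the chain. -/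
abbrev F (α : ℕ → Ω → ℕ) (k : ℕ) : MeasurableSpace Ω :=
  ⨆ i ∈ Finset.range (k + 1), MeasurableSpace.comap (α i) ⊤

lemma comap_le_F {i k : ℕ} (h : i ≤ k) : MeasurableSpace.comap (α i) ⊤ ≤ F α k :=
  le_biSup (fun i => MeasurableSpace.comap (α i) ⊤) (Finset.mem_range.2 (Nat.lt_succ_of_le h))

lemma F_le (hmeas : ∀ k, Measurable (α k)) (k : ℕ) : F α k ≤ ‹MeasurableSpace Ω› := by
  refine iSup_le fun i => iSup_le fun _ => ?_
  exact (hmeas i).comap_le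

lemma measurableSet_preimage_F {i k : ℕ} (h : i ≤ k) (s : Set ℕ) :
    MeasurableSet[F α k] (α i ⁻¹' s) :=
  comap_le_F h _ ⟨s, trivial, rfl⟩

/-- Key conditional bound: a conditional-average bound on the fiber `{α k = m}`
transfers to any subset of the fiber measurable with respect to the past. -/
lemma key_bound (hmeas : ∀ k, Measurable (α k))
    (hMarkov : ∀ k (g : ℕ → ℝ),
      μ[(fun ω => g (α (k + 1) ω)) | F α k]
        =ᵐ[μ] μ[(fun ω => g (α (k + 1) ω)) | MeasurableSpace.comap (α k) ⊤])
    (k m : ℕ) (g : ℕ → ℝ) (B c₀ : ℝ) (hB : ∀ x, |g x| ≤ B)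
    (hfib : μ {ω | α k ω = m} ≠ 0 →
      ∫ ω in {ω | α k ω = m}, g (α (k + 1) ω) ∂μ ≤ c₀ * (μ {ω | α k ω = m}).toReal)
    (C : Set Ω) (hC : MeasurableSet[F α k] C) (hCsub : C ⊆ {ω | α k ω = m}) :
    ∫ ω in C, g (α (k + 1) ω) ∂μ ≤ c₀ * (μ C).toReal := by
  by_cases hμC : μ C = 0
  · rw [Measure.restrict_eq_zero.2 hμC, integral_zero_measure, hμC]
    simp
  have hfibne : μ {ω | α k ω = m} ≠ 0 := fun h => hμC (measure_mono_null hCsub h)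
  set X : Ω → ℝ := fun ω => g (α (k + 1) ω) with hX
  have hXm : Measurable X := measurable_from_top.comp (hmeas (k + 1))
  have hXint : Integrable X μ :=
    (integrable_const B).mono' hXm.aestronglyMeasurable
      (Eventually.of_forall fun ω => by simpa [Real.norm_eq_abs] using hB (α (k + 1) ω))
  set h' : Ω → ℝ := μ[X | MeasurableSpace.comap (α k) ⊤] with hh'
  have hconst : ∀ ω₁ ω₂, α k ω₁ = α k ω₂ → h' ω₁ = h' ω₂ := by
    intro ω₁ ω₂ he
    have hm' : Measurable[MeasurableSpace.comap (α k) ⊤] h' :=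
      stronglyMeasurable_condExp.measurable
    have hS : MeasurableSet[MeasurableSpace.comap (α k) ⊤] (h' ⁻¹' {h' ω₁}) :=
      hm' (measurableSet_singleton _)
    rcases MeasurableSpace.measurableSet_comap.mp hS with ⟨t, -, ht⟩
    have h1 : ω₁ ∈ α k ⁻¹' t := by rw [ht]; exact rfl
    have h2 : ω₂ ∈ α k ⁻¹' t := by simpa [Set.mem_preimage, ← he] using h1
    rw [ht] at h2
    exact (h2 : h' ω₂ = h' ω₁).symm
  obtain ⟨ω₀, hω₀⟩ := nonempty_of_measure_ne_zero hfibne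
  set c : ℝ := h' ω₀ with hc
  have hfibF : MeasurableSet[F α k] {ω | α k ω = m} :=
    measurableSet_preimage_F le_rfl {m}
  have hcalc : ∀ S : Set Ω, MeasurableSet[F α k] S → S ⊆ {ω | α k ω = m} →
      ∫ ω in S, X ω ∂μ = c * (μ S).toReal := by
    intro S hSF hSsub
    have hSamb : MeasurableSet S := F_le hmeas k S hSF
    have e1 : ∫ ω in S, X ω ∂μ = ∫ ω in S, (μ[X | F α k]) ω ∂μ :=
      (setIntegral_condExp (F_le hmeas k) hXint hSF).symm
    have e2 : ∫ ω in S, (μ[X | F α k]) ω ∂μ = ∫ ω in S, h' ω ∂μ :=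
      setIntegral_congr_ae hSamb ((hMarkov k g).mono fun ω h _ => h)
    have e3 : ∫ ω in S, h' ω ∂μ = ∫ ω in S, c ∂μ := by
      refine setIntegral_congr_fun hSamb fun ω hω => ?_
      exact hconst ω ω₀ ((hSsub hω).trans hω₀.symm)
    rw [e1, e2, e3, setIntegral_const, smul_eq_mul, mul_comm, measureReal_def]
  have hfibeq := hcalc _ hfibF (fun _ h => h)
  have hfibpos : 0 < (μ {ω | α k ω = m}).toReal :=
    ENNReal.toReal_pos hfibne (measure_ne_top μ _)
  have hcle : c ≤ c₀ := by
    have := hfib hfibne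
    rw [hfibeq] at this
    exact le_of_mul_le_mul_right (by linarith) hfibpos
  rw [hcalc C hC hCsub]
  exact mul_le_mul_of_nonneg_right hcle ENNReal.toReal_nonneg


/-- Lebesgue-integral drift bound on past-measurable subsets of a fiber above `N`. -/
lemma piece_bound (hmeas : ∀ k, Measurable (α k))
    (hMarkov : ∀ k (g : ℕ → ℝ),
      μ[(fun ω => g (α (k + 1) ω)) | F α k]
        =ᵐ[μ] μ[(fun ω => g (α (k + 1) ω)) | MeasurableSpace.comap (α k) ⊤])
    {N : ℕ}
    (hdrift : ∀ k n, N < n → μ {ω | α k ω = n} ≠ 0 →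
      (∫ ω in {ω | α k ω = n}, ((α (k + 1) ω : ℝ) - (n : ℝ)) ∂μ)
        ≤ -(1 / 2) * (μ {ω | α k ω = n}).toReal)
    (k m : ℕ) (hm : N < m) (C : Set Ω) (hC : MeasurableSet[F α k] C)
    (hCsub : C ⊆ {ω | α k ω = m}) :
    ∫⁻ ω in C, (α (k + 1) ω : ENNReal) ∂μ ≤ ENNReal.ofReal ((m : ℝ) - 1 / 2) * μ C := by
  by_cases hμC : μ C = 0
  · rw [Measure.restrict_eq_zero.2 hμC]
    simp
  set fib := {ω | α k ω = m} with hfibdef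
  have hfibne : μ fib ≠ 0 := fun h => hμC (measure_mono_null hCsub h)
  have hfibmeas : MeasurableSet fib := (hmeas k) (by trivial : MeasurableSet ({m} : Set ℕ))
  have hfibpos : 0 < (μ fib).toReal := ENNReal.toReal_pos hfibne (measure_ne_top μ _)
  have hdr := hdrift k m hm hfibne
  have hCmeas : MeasurableSet C := F_le hmeas k C hC
  -- integrability on the fiber is forced by the drift hypothesis
  have hint : IntegrableOn (fun ω => ((α (k + 1) ω : ℝ) - (m : ℝ))) fib μ := by
    by_contra h
    rw [integral_undef h] at hdr
    nlinarith
  have hconstint : ∀ (c : ℝ) (S : Set Ω), IntegrableOn (fun _ => c) S μ := fun c S =>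
    integrableOn_const (measure_ne_top _ _)
  have hintα : IntegrableOn (fun ω => ((α (k + 1) ω : ℝ))) fib μ := by
    have h2 : (fun ω => ((α (k + 1) ω : ℝ) - (m : ℝ)) + (m : ℝ))
        = fun ω => ((α (k + 1) ω : ℝ)) := by funext ω; ring
    rw [← h2]
    exact hint.add (hconstint m fib)
  have hαbound : ∫ ω in fib, ((α (k + 1) ω : ℝ)) ∂μ ≤ ((m : ℝ) - 1 / 2) * (μ fib).toReal := by
    have e : ∫ ω in fib, ((α (k + 1) ω : ℝ)) ∂μ
        = (∫ ω in fib, ((α (k + 1) ω : ℝ) - (m : ℝ)) ∂μ) + ∫ ω in fib, (m : ℝ) ∂μ := by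
      rw [← integral_add hint (hconstint m fib)]
      congr 1; funext ω; ring
    rw [e, setIntegral_const, smul_eq_mul] at *
    rw [measureReal_def] at *
    nlinarith
  have hmincast : ∀ M : ℕ, Measurable (fun ω => min ((α (k + 1) ω : ℝ)) (M : ℝ)) := fun M =>
    (measurable_from_top.comp (hmeas (k + 1)) :
      Measurable fun ω => ((α (k + 1) ω : ℝ))).min measurable_const
  have hminint : ∀ (M : ℕ) (S : Set Ω),
      IntegrableOn (fun ω => min ((α (k + 1) ω : ℝ)) (M : ℝ)) S μ := fun M S =>
    (hconstint (M : ℝ) S).mono' (hmincast M).aestronglyMeasurable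
      (Eventually.of_forall fun ω => by
        rw [Real.norm_eq_abs, abs_of_nonneg (le_min (Nat.cast_nonneg _) (Nat.cast_nonneg _))]
        exact min_le_right _ _)
  have hm1 : (1 : ℝ) ≤ (m : ℝ) := by
    have : 0 < m := lt_of_le_of_lt (Nat.zero_le N) hm
    exact_mod_cast this
  -- truncated bounds on C via the key conditional lemma
  have hCM : ∀ M : ℕ, ∫ ω in C, min ((α (k + 1) ω : ℝ)) (M : ℝ) ∂μ
      ≤ ((m : ℝ) - 1 / 2) * (μ C).toReal := by
    intro M
    refine key_bound hmeas hMarkov k m (fun x => min (x : ℝ) (M : ℝ)) (M : ℝ) _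
      (fun x => ?_) (fun _ => ?_) C hC hCsub
    · rw [abs_of_nonneg (le_min (Nat.cast_nonneg _) (Nat.cast_nonneg _))]
      exact min_le_right _ _
    · calc ∫ ω in fib, min ((α (k + 1) ω : ℝ)) (M : ℝ) ∂μ
          ≤ ∫ ω in fib, ((α (k + 1) ω : ℝ)) ∂μ :=
            integral_mono (hminint M fib) hintα fun ω => min_le_left _ _
        _ ≤ _ := hαbound
  -- pass to the Lebesgue integral by monotone convergence
  have hmono : Monotone (fun (M : ℕ) (ω : Ω) =>
      ENNReal.ofReal (min ((α (k + 1) ω : ℝ)) (M : ℝ))) := by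
    intro M₁ M₂ h ω
    exact ENNReal.ofReal_le_ofReal (min_le_min le_rfl (by exact_mod_cast h))
  have hsup : ∀ ω, (⨆ M : ℕ, ENNReal.ofReal (min ((α (k + 1) ω : ℝ)) (M : ℝ)))
      = (α (k + 1) ω : ENNReal) := by
    intro ω
    refine le_antisymm (iSup_le fun M => ?_) ?_
    · rw [← ENNReal.ofReal_natCast (α (k + 1) ω)]
      exact ENNReal.ofReal_le_ofReal (min_le_left _ _)
    · rw [← ENNReal.ofReal_natCast (α (k + 1) ω)]
      refine le_trans (le_of_eq ?_) (le_iSup _ (α (k + 1) ω))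
      rw [min_self]
  have hmeasM : ∀ M : ℕ, Measurable (fun ω =>
      ENNReal.ofReal (min ((α (k + 1) ω : ℝ)) (M : ℝ))) := by
    intro M
    exact (measurable_from_top.comp (hmeas (k + 1)) :
      Measurable fun ω => ((α (k+1) ω : ℝ))).min measurable_const |>.ennreal_ofReal
  calc ∫⁻ ω in C, (α (k + 1) ω : ENNReal) ∂μ
      = ∫⁻ ω in C, ⨆ M : ℕ, ENNReal.ofReal (min ((α (k + 1) ω : ℝ)) (M : ℝ)) ∂μ := by
        refine lintegral_congr fun ω => (hsup ω).symm
    _ = ⨆ M : ℕ, ∫⁻ ω in C, ENNReal.ofReal (min ((α (k + 1) ω : ℝ)) (M : ℝ)) ∂μ :=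
        lintegral_iSup (fun M => hmeasM M) (fun M₁ M₂ h ω => hmono h ω)
    _ ≤ ENNReal.ofReal ((m : ℝ) - 1 / 2) * μ C := by
        refine iSup_le fun M => ?_
        rw [← ofReal_integral_eq_lintegral_ofReal (hminint M C)
          (Eventually.of_forall fun ω => le_min (Nat.cast_nonneg _) (Nat.cast_nonneg _))]
        calc ENNReal.ofReal (∫ ω in C, min ((α (k + 1) ω : ℝ)) (M : ℝ) ∂μ)
            ≤ ENNReal.ofReal (((m : ℝ) - 1 / 2) * (μ C).toReal) :=
              ENNReal.ofReal_le_ofReal (hCM M)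
          _ = ENNReal.ofReal ((m : ℝ) - 1 / 2) * ENNReal.ofReal ((μ C).toReal) := by
              refine ENNReal.ofReal_mul ?_
              linarith
          _ = ENNReal.ofReal ((m : ℝ) - 1 / 2) * μ C := by
              rw [ENNReal.ofReal_toReal (measure_ne_top μ C)]


/-- Main estimate: the chain a.s. cannot stay above `N` forever after time `K`,
on the event where it starts at level `n` at time `K`. -/
lemma main_zero (hmeas : ∀ k, Measurable (α k))
    (hMarkov : ∀ k (g : ℕ → ℝ),
      μ[(fun ω => g (α (k + 1) ω)) | F α k]
        =ᵐ[μ] μ[(fun ω => g (α (k + 1) ω)) | MeasurableSpace.comap (α k) ⊤])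
    {N : ℕ}
    (hdrift : ∀ k n, N < n → μ {ω | α k ω = n} ≠ 0 →
      (∫ ω in {ω | α k ω = n}, ((α (k + 1) ω : ℝ) - (n : ℝ)) ∂μ)
        ≤ -(1 / 2) * (μ {ω | α k ω = n}).toReal)
    (K n : ℕ) (hn : N < n) :
    μ ({ω | ∀ k, K ≤ k → N < α k ω} ∩ {ω | α K ω = n}) = 0 := by
  classical
  set S := {ω | ∀ k, K ≤ k → N < α k ω} ∩ {ω | α K ω = n} with hSdef
  set D : ℕ → Set Ω := fun j =>
    {ω | α K ω = n} ∩ ⋂ i ∈ Finset.range (j + 1), {ω | N < α (K + i) ω} with hDdef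
  have hDF : ∀ j, MeasurableSet[F α (K + j)] (D j) := by
    intro j
    refine MeasurableSet.inter ?_ ?_
    · exact measurableSet_preimage_F (Nat.le_add_right K j) {n}
    · refine Finset.measurableSet_biInter _ fun i hi => ?_
      exact measurableSet_preimage_F
        (Nat.add_le_add_left (Nat.lt_succ_iff.mp (Finset.mem_range.mp hi)) K) {x | N < x}
  have hDmeas : ∀ j, MeasurableSet (D j) := fun j => F_le hmeas (K + j) _ (hDF j)
  have hDanti : ∀ j, D (j + 1) ⊆ D j := by
    intro j ω hω
    refine ⟨hω.1, Set.mem_biInter fun i hi => ?_⟩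
    have h2 := Set.mem_iInter₂.1 hω.2
    exact h2 i (Finset.mem_range.2 ((Finset.mem_range.1 hi).trans (Nat.lt_succ_self _)))
  have hSsubD : ∀ j, S ⊆ D j := by
    intro j ω hω
    refine ⟨hω.2, ?_⟩
    refine Set.mem_biInter fun i _ => ?_
    exact hω.1 (K + i) (Nat.le_add_right K i)
  have hDfib : ∀ j ω, ω ∈ D j → N < α (K + j) ω := by
    intro j ω hω
    have := hω.2
    rw [Set.mem_iInter₂] at this
    exact this j (Finset.self_mem_range_succ j)
  -- the pieces of D j according to the value of the chain at time K + j
  set P : ℕ → ℕ → Set Ω := fun j m => D j ∩ {ω | α (K + j) ω = m} with hPdef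
  have hPF : ∀ j m, MeasurableSet[F α (K + j)] (P j m) := fun j m =>
    (hDF j).inter (measurableSet_preimage_F le_rfl {m})
  have hPmeas : ∀ j m, MeasurableSet (P j m) := fun j m => F_le hmeas (K + j) _ (hPF j m)
  have hPdisj : ∀ j, Pairwise (Function.onFun Disjoint fun m => P j m) := by
    intro j m₁ m₂ hne
    refine Set.disjoint_left.2 fun ω h1 h2 => hne ?_
    exact h1.2.symm.trans h2.2
  have hPunion : ∀ j, D j = ⋃ m, P j m := by
    intro j
    ext ω
    constructor
    · intro hω; exact Set.mem_iUnion.2 ⟨α (K + j) ω, hω, rfl⟩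
    · intro hω; rcases Set.mem_iUnion.1 hω with ⟨m, hm⟩; exact hm.1
  -- one-step estimate
  have hstep : ∀ j, (∫⁻ ω in D (j + 1), (α (K + (j + 1)) ω : ENNReal) ∂μ)
      + (1 / 2 : ENNReal) * μ S ≤ ∫⁻ ω in D j, (α (K + j) ω : ENNReal) ∂μ := by
    intro j
    have t1 : ∫⁻ ω in D (j + 1), (α (K + (j + 1)) ω : ENNReal) ∂μ
        ≤ ∫⁻ ω in D j, (α (K + (j + 1)) ω : ENNReal) ∂μ :=
      lintegral_mono_set (hDanti j)
    have t3 : ∫⁻ ω in D j, (α (K + (j + 1)) ω : ENNReal) ∂μ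
        = ∑' m, ∫⁻ ω in P j m, (α (K + (j + 1)) ω : ENNReal) ∂μ := by
      rw [hPunion j]
      exact lintegral_iUnion (hPmeas j) (hPdisj j) _
    have t4 : ∀ m, ∫⁻ ω in P j m, (α (K + (j + 1)) ω : ENNReal) ∂μ
        ≤ ENNReal.ofReal ((m : ℝ) - 1 / 2) * μ (P j m) := by
      intro m
      by_cases hmN : N < m
      · exact piece_bound hmeas hMarkov hdrift (K + j) m hmN (P j m) (hPF j m)
          (fun ω hω => hω.2)
      · have : P j m = ∅ := by
          ext ω
          simp only [Set.mem_empty_iff_false, iff_false]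
          intro hω
          exact hmN (hω.2 ▸ hDfib j ω hω.1)
        rw [this]
        simp
    have t5 : ∀ m : ℕ, ENNReal.ofReal ((m : ℝ) - 1 / 2) * μ (P j m)
        + (1 / 2 : ENNReal) * μ (P j m) = (m : ENNReal) * μ (P j m) := by
      intro m
      by_cases hmN : N < m
      · rw [← add_mul]
        congr 1
        have hm1 : (1 / 2 : ℝ) ≤ (m : ℝ) := by
          have : 0 < m := lt_of_le_of_lt (Nat.zero_le N) hmN
          have : (1 : ℝ) ≤ (m : ℝ) := by exact_mod_cast this
          linarith
        rw [show (1 / 2 : ENNReal) = ENNReal.ofReal (1 / 2) by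
            rw [ENNReal.ofReal_div_of_pos] <;> norm_num,
          ← ENNReal.ofReal_add (by linarith) (by norm_num)]
        rw [sub_add_cancel, ENNReal.ofReal_natCast]
      · have : P j m = ∅ := by
          ext ω
          simp only [Set.mem_empty_iff_false, iff_false]
          intro hω
          exact hmN (hω.2 ▸ hDfib j ω hω.1)
        rw [this]
        simp
    have t6 : ∀ m : ℕ, ∫⁻ ω in P j m, (α (K + j) ω : ENNReal) ∂μ = (m : ENNReal) * μ (P j m) := by
      intro m
      rw [setLIntegral_congr_fun_ae (hPmeas j m)
        (Eventually.of_forall fun ω hω => by rw [hω.2] : ∀ᵐ ω ∂μ, ω ∈ P j m →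
          ((α (K + j) ω : ENNReal)) = (m : ENNReal))]
      exact setLIntegral_const _ _
    have t7 : ∫⁻ ω in D j, (α (K + j) ω : ENNReal) ∂μ = ∑' m : ℕ, (m : ENNReal) * μ (P j m) := by
      rw [hPunion j, lintegral_iUnion (hPmeas j) (hPdisj j)]
      exact tsum_congr t6
    have t8 : μ S ≤ ∑' m : ℕ, μ (P j m) := by
      rw [← measure_iUnion (hPdisj j) (hPmeas j), ← hPunion j]
      exact measure_mono (hSsubD j)
    calc (∫⁻ ω in D (j + 1), (α (K + (j + 1)) ω : ENNReal) ∂μ) + (1 / 2 : ENNReal) * μ S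
        ≤ (∑' m : ℕ, ENNReal.ofReal ((m : ℝ) - 1 / 2) * μ (P j m))
          + (1 / 2 : ENNReal) * ∑' m : ℕ, μ (P j m) := by
          refine add_le_add (t1.trans ?_) (mul_le_mul_right t8 _)
          rw [t3]
          exact ENNReal.tsum_le_tsum t4
      _ = ∑' m : ℕ, ((m : ENNReal) * μ (P j m)) := by
          rw [← ENNReal.tsum_mul_left, ← ENNReal.tsum_add]
          exact tsum_congr fun m => t5 m
      _ = ∫⁻ ω in D j, (α (K + j) ω : ENNReal) ∂μ := t7.symm
  -- iterate
  have hiter : ∀ j, (∫⁻ ω in D j, (α (K + j) ω : ENNReal) ∂μ)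
      + (j : ENNReal) * ((1 / 2 : ENNReal) * μ S)
      ≤ ∫⁻ ω in D 0, (α (K + 0) ω : ENNReal) ∂μ := by
    intro j
    induction j with
    | zero => simp
    | succ j ih =>
      calc (∫⁻ ω in D (j + 1), (α (K + (j + 1)) ω : ENNReal) ∂μ)
          + ((j + 1 : ℕ) : ENNReal) * ((1 / 2 : ENNReal) * μ S)
          = ((∫⁻ ω in D (j + 1), (α (K + (j + 1)) ω : ENNReal) ∂μ)
            + (1 / 2 : ENNReal) * μ S) + (j : ENNReal) * ((1 / 2 : ENNReal) * μ S) := by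
            push_cast
            ring
        _ ≤ (∫⁻ ω in D j, (α (K + j) ω : ENNReal) ∂μ)
            + (j : ENNReal) * ((1 / 2 : ENNReal) * μ S) := add_le_add_left (hstep j) _
        _ ≤ _ := ih
  have hJ0 : ∫⁻ ω in D 0, (α (K + 0) ω : ENNReal) ∂μ ≤ (n : ENNReal) := by
    rw [setLIntegral_congr_fun_ae (hDmeas 0)
      (Eventually.of_forall fun ω hω => by simp only [Nat.add_zero]; rw [hω.1] : ∀ᵐ ω ∂μ, ω ∈ D 0 →
        ((α (K + 0) ω : ENNReal)) = (n : ENNReal)), setLIntegral_const _ _]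
    calc (n : ENNReal) * μ (D 0) ≤ (n : ENNReal) * 1 :=
        mul_le_mul_right prob_le_one _
      _ = n := mul_one _
  have hbound : ∀ j : ℕ, (j : ENNReal) * ((1 / 2 : ENNReal) * μ S) ≤ (n : ENNReal) :=
    fun j => le_trans (le_add_self) ((hiter j).trans hJ0)
  by_contra hne
  have hx0 : (1 / 2 : ENNReal) * μ S ≠ 0 := by
    simp only [ne_eq, mul_eq_zero, not_or]
    exact ⟨by norm_num, hne⟩
  have hxtop : (1 / 2 : ENNReal) * μ S ≠ ⊤ :=
    ENNReal.mul_ne_top (by norm_num) (measure_ne_top μ S)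
  obtain ⟨j, hj⟩ := ENNReal.exists_nat_gt
    (ENNReal.div_lt_top (ENNReal.natCast_ne_top n) hx0).ne
  have : (n : ENNReal) < (j : ENNReal) * ((1 / 2 : ENNReal) * μ S) :=
    (ENNReal.div_lt_iff (Or.inl hx0) (Or.inl hxtop)).1 hj
  exact absurd (hbound j) (not_le.2 this)

end BKNSAux

open BKNSAux in
/-- BKNS random-walk lemma: a Markov chain `α` on the nonnegative integers whose
one-step drift above level `N` is at most `-1/2`, whose conditional variance above
level `N` is bounded, and whose downward steps have size at most `1`, almost surely
satisfies `liminf α_k < ∞`, i.e. visits some bounded region infinitely often. -/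
theorem random_walk_liminf_finite
    {Ω : Type*} [MeasurableSpace Ω] (μ : Measure Ω) [IsProbabilityMeasure μ]
    (α : ℕ → Ω → ℕ) (hmeas : ∀ k, Measurable (α k))
    (N : ℕ) (V : ℝ) (hV : 0 ≤ V)
    -- Markov property: conditionally on the past, the next state depends only on
    -- the current state.
    (hMarkov : ∀ k (g : ℕ → ℝ),
      μ[(fun ω => g (α (k + 1) ω)) | ⨆ i ∈ Finset.range (k + 1), MeasurableSpace.comap (α i) ⊤]
        =ᵐ[μ] μ[(fun ω => g (α (k + 1) ω)) | MeasurableSpace.comap (α k) ⊤])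
    -- Negative drift above level N:
    (hdrift : ∀ k n, N < n → μ {ω | α k ω = n} ≠ 0 →
      (∫ ω in {ω | α k ω = n}, ((α (k + 1) ω : ℝ) - (n : ℝ)) ∂μ)
        ≤ -(1 / 2) * (μ {ω | α k ω = n}).toReal)
    -- Bounded conditional second moment (hence variance) above level N:
    (hvar : ∀ k n, N < n → μ {ω | α k ω = n} ≠ 0 →
      (∫ ω in {ω | α k ω = n}, ((α (k + 1) ω : ℝ) - (n : ℝ)) ^ 2 ∂μ)
        ≤ V * (μ {ω | α k ω = n}).toReal)
    -- Downward steps of size at most 1: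
    (hdown : ∀ᵐ ω ∂μ, ∀ k, α k ω ≤ α (k + 1) ω + 1) :
    ∀ᵐ ω ∂μ, ∃ M : ℕ, {k | α k ω ≤ M}.Infinite := by
  set A : ℕ → Set Ω := fun K => {ω | ∀ k, K ≤ k → N < α k ω} with hAdef
  have hA : ∀ K, μ (A K) = 0 := by
    intro K
    have hsub : A K ⊆ ⋃ n : ℕ, (A K ∩ {ω | α K ω = n}) := by
      intro ω hω
      exact Set.mem_iUnion.2 ⟨α K ω, hω, rfl⟩
    refine measure_mono_null hsub (measure_iUnion_null fun n => ?_)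
    by_cases hn : N < n
    · exact main_zero hmeas hMarkov hdrift K n hn
    · have : A K ∩ {ω | α K ω = n} = ∅ := by
        ext ω
        simp only [Set.mem_empty_iff_false, iff_false]
        rintro ⟨h1, h2⟩
        exact hn (h2 ▸ h1 K le_rfl)
      rw [this, measure_empty]
  have hU : μ (⋃ K, A K) = 0 := measure_iUnion_null hA
  have hae : ∀ᵐ ω ∂μ, ω ∉ ⋃ K, A K := by
    rw [ae_iff]
    have : {ω | ¬ ω ∉ ⋃ K, A K} = ⋃ K, A K := by ext ω; simp
    rw [this]
    exact hU
  filter_upwards [hae] with ω hω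
  refine ⟨N, ?_⟩
  rw [← Nat.frequently_atTop_iff_infinite, frequently_atTop]
  intro K
  have : ω ∉ A K := fun h => hω (Set.mem_iUnion.2 ⟨K, h⟩)
  simp only [hAdef, Set.mem_setOf_eq, not_forall] at this
  obtain ⟨k, hk, hk2⟩ := this
  exact ⟨k, hk, Nat.le_of_not_lt hk2⟩
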